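/- Let l_∞ = a ⊕ n be a metric solvable Lie algebra with a abelian, orthogonal decomposition, nilradical n = n_u ⊕ V₁ ⊕ V₂ (orthogonal), and suppose: (i) each A ∈ a acts on n by normal operators; (ii) for X ranging over an orthonormal basis {X_1,…,X_s} of n_u, the only nonzero brackets involving n are [X_k, v] ∈ V₂ for v ∈ V₁, and [a, n] ⊆ n; (iii) the mean curvature vector is H = m·Z with ad Z|_{V₁⊕V₂} = Id, ad Z|_{n_u} = 0, where m = dim(V₁⊕V₂). Then for X, Y ∈ {X_1,…,X_s}: ⟨Ric X, Y⟩ = −(1/2) tr (π(Y)|_{V₁})ᵗ (π(X)|_{V₁}), where π(X)|_{V₁} : V₁ → V₂ denotes the map v ↦ [X, v]. -/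

import Mathlib

open scoped RealInnerProductSpace

/-- For the metric solvable Lie algebra `l_∞ = a ⊕ n`, `n = n_u ⊕ V₁ ⊕ V₂`, with
the stated bracket structure, the Ricci form on the directions `X, Y ∈ n_u` is
`⟨Ric X, Y⟩ = -(1/2) tr((π(Y)|_{V₁})ᵗ (π(X)|_{V₁}))`. -/
theorem stmt16 {E : Type*} [NormedAddCommGroup E] [InnerProductSpace ℝ E]
    [FiniteDimensional ℝ E] {ι : Type*} [Fintype ι] {s : ℕ}
    (br : E →ₗ[ℝ] E →ₗ[ℝ] E)
    (hskew : ∀ X Y, br X Y = - br Y X)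
    (hjac : ∀ X Y Z, br X (br Y Z) + br Y (br Z X) + br Z (br X Y) = 0)
    (a nu V₁ V₂ : Submodule ℝ E)
    (N : Submodule ℝ E) (hN : N = nu ⊔ V₁ ⊔ V₂)   -- the nilradical
    (hcompl : IsCompl a N)
    (horth_aN : ∀ x ∈ a, ∀ y ∈ N, ⟪x, y⟫ = 0)
    (horth1 : ∀ x ∈ nu, ∀ y ∈ V₁, ⟪x, y⟫ = 0)
    (horth2 : ∀ x ∈ nu, ∀ y ∈ V₂, ⟪x, y⟫ = 0)
    (horth3 : ∀ x ∈ V₁, ∀ y ∈ V₂, ⟪x, y⟫ = 0)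
    (habel : ∀ x ∈ a, ∀ y ∈ a, br x y = 0)
    (han : ∀ x ∈ a, ∀ y ∈ N, br x y ∈ N)          -- `[a, n] ⊆ n`
    -- (i) each `A ∈ a` acts on `n` by a normal operator
    (adN : E → (N →ₗ[ℝ] N)) (hadN : ∀ A : E, ∀ x : N, (adN A x : E) = br A x)
    (hnormal : ∀ A ∈ a,
      adN A ∘ₗ LinearMap.adjoint (adN A) = LinearMap.adjoint (adN A) ∘ₗ adN A)
    -- (ii) the only nonzero brackets inside `n` are `[n_u, V₁] ⊆ V₂`
    (hbr1 : ∀ x ∈ nu, ∀ y ∈ nu, br x y = 0)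
    (hbr2 : ∀ x ∈ nu, ∀ v ∈ V₁, br x v ∈ V₂)
    (hbr3 : ∀ x ∈ nu, ∀ w ∈ V₂, br x w = 0)
    (hbr4 : ∀ v ∈ V₁ ⊔ V₂, ∀ w ∈ V₁ ⊔ V₂, br v w = 0)
    -- (iii) the mean curvature vector is `H = m·Z` with `ad Z = Id` on `V₁ ⊕ V₂`,
    --       `ad Z = 0` on `n_u`, `m = dim (V₁ ⊕ V₂)`
    (Z Hm : E) (m : ℕ) (hm : m = Module.finrank ℝ ↥(V₁ ⊔ V₂))
    (hZ1 : ∀ v ∈ V₁ ⊔ V₂, br Z v = v)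
    (hZ2 : ∀ x ∈ nu, br Z x = 0)
    (hHm : Hm = (m : ℝ) • Z)
    (hmean : ∀ W : E, ⟪Hm, W⟫ = LinearMap.trace ℝ E (br W))
    -- an orthonormal basis of `n` and the orthonormal basis `{X_1, …, X_s}` of `n_u`
    (bn : OrthonormalBasis ι ℝ N)
    (bx : Fin s → E) (hbxo : Orthonormal ℝ bx) (hbxmem : ∀ k, bx k ∈ nu)
    (hbxspan : Submodule.span ℝ (Set.range bx) = nu)
    -- the maps `π(X)|_{V₁} : V₁ → V₂`
    (res : E → (V₁ →ₗ[ℝ] V₂)) (hres : ∀ x : E, ∀ v : V₁, (res x v : E) = br x v) :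
    ∀ k l : Fin s,
      (-(1/2) * ∑ i, ∑ j, ⟪br (bx k) (bn i : E), (bn j : E)⟫ * ⟪br (bx l) (bn i : E), (bn j : E)⟫
        + (1/4) * ∑ i, ∑ j, ⟪br (bn i : E) (bn j : E), bx k⟫ * ⟪br (bn i : E) (bn j : E), bx l⟫
        - (1/2) * (⟪br Hm (bx k), bx l⟫ + ⟪bx k, br Hm (bx l)⟫)) =
      -(1/2) * LinearMap.trace ℝ V₁ (LinearMap.adjoint (res (bx l)) ∘ₗ res (bx k)) := by
  intro k l
  have hnuN : nu ≤ N := hN ▸ le_sup_of_le_left le_sup_left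
  have hV1N : V₁ ≤ N := hN ▸ le_sup_of_le_left le_sup_right
  have hV2N : V₂ ≤ N := hN ▸ le_sup_right
  have hKnu : bx k ∈ nu := hbxmem k
  have hLnu : bx l ∈ nu := hbxmem l
  -- brackets of n_u with V₁ ⊔ V₂ land in V₂
  have hbrmix : ∀ x ∈ nu, ∀ v ∈ V₁ ⊔ V₂, br x v ∈ V₂ := by
    intro x hx v hv
    obtain ⟨p, hp, q, hq, rfl⟩ := Submodule.mem_sup.1 hv
    have h0 : br x q = 0 := hbr3 x hx q hq
    have h1 : br x p ∈ V₂ := hbr2 x hx p hp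
    simpa [map_add, h0] using h1
  -- brackets inside N land in V₂
  have hbrNN : ∀ x ∈ N, ∀ y ∈ N, br x y ∈ V₂ := by
    intro x hx y hy
    rw [hN, sup_assoc] at hx hy
    obtain ⟨u, hu, v, hv, rfl⟩ := Submodule.mem_sup.1 hx
    obtain ⟨u', hu', v', hv', rfl⟩ := Submodule.mem_sup.1 hy
    have h1 : br u u' = 0 := hbr1 u hu u' hu'
    have h4 : br v v' = 0 := hbr4 v hv v' hv'
    have h2 : br u v' ∈ V₂ := hbrmix u hu v' hv'
    have h3 : br v u' ∈ V₂ := by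
      rw [hskew v u']
      exact V₂.neg_mem (hbrmix u' hu' v hv)
    have : br (u + v) (u' + v') = br u v' + br v u' := by
      simp [map_add, h1, h4]
      abel
    rw [this]
    exact V₂.add_mem h2 h3
  -- third term vanishes
  have hHmbr : ∀ x ∈ nu, br Hm x = 0 := by
    intro x hx
    rw [hHm]
    simp [hZ2 x hx]
  have hterm3 : (⟪br Hm (bx k), bx l⟫ + ⟪bx k, br Hm (bx l)⟫ : ℝ) = 0 := by
    rw [hHmbr _ hKnu, hHmbr _ hLnu]
    simp
  -- second term vanishes
  have hterm2 : ∀ i j : ι, (⟪br (bn i : E) (bn j : E), bx k⟫ : ℝ) = 0 := by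
    intro i j
    have h2 : br (bn i : E) (bn j : E) ∈ V₂ := hbrNN _ (bn i).2 _ (bn j).2
    rw [real_inner_comm]
    exact horth2 _ hKnu _ h2
  have hterm2' : ∀ i j : ι, (⟪br (bn i : E) (bn j : E), bx l⟫ : ℝ) = 0 := by
    intro i j
    have h2 : br (bn i : E) (bn j : E) ∈ V₂ := hbrNN _ (bn i).2 _ (bn j).2
    rw [real_inner_comm]
    exact horth2 _ hLnu _ h2
  -- Parseval in N
  have parseval : ∀ (u v : E), u ∈ N → v ∈ N →
      ∑ j, ⟪u, (bn j : E)⟫ * ⟪v, (bn j : E)⟫ = ⟪u, v⟫ := by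
    intro u v hu hv
    have h := bn.sum_inner_mul_inner (⟨u, hu⟩ : N) (⟨v, hv⟩ : N)
    simp only [Submodule.coe_inner] at h
    rw [← h]
    congr 1
    ext j
    rw [real_inner_comm (bn j : E) v]
  -- bracket with n_u factors through the orthogonal projection onto V₁
  have hproj : ∀ x ∈ nu, ∀ y ∈ N, br x y = br x (V₁.orthogonalProjectionOnto y : E) := by
    intro x hx y hy
    rw [hN] at hy
    obtain ⟨p, hp, w, hw, rfl⟩ := Submodule.mem_sup.1 hy
    obtain ⟨u, hu, v, hv, rfl⟩ := Submodule.mem_sup.1 hp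
    have hop : (V₁.orthogonalProjectionOnto (u + v + w) : E) = v := by
      apply Submodule.eq_starProjection_of_mem_of_inner_eq_zero hv
      intro z hz
      have e1 : ⟪u, z⟫ = 0 := horth1 u hu z hz
      have e2 : ⟪w, z⟫ = 0 := by rw [real_inner_comm]; exact horth3 z hz w hw
      have : u + v + w - v = u + w := by abel
      rw [this, inner_add_left, e1, e2, add_zero]
    rw [hop]
    simp [map_add, hbr1 x hx u hu, hbr3 x hx w hw]
  -- the first sum
  have hS1 : ∀ x ∈ nu, ∀ i : ι, br x (bn i : E) = (res x (V₁.orthogonalProjectionOnto (bn i : E)) : E) := by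
    intro x hx i
    rw [hproj x hx _ (bn i).2, hres]
  -- orthonormal basis of V₁
  let c := stdOrthonormalBasis ℝ V₁
  -- key computation: the first double sum equals ∑_t ⟪res (bx k) (c t), res (bx l) (c t)⟫
  have hmain : ∑ i, ∑ j, ⟪br (bx k) (bn i : E), (bn j : E)⟫ * ⟪br (bx l) (bn i : E), (bn j : E)⟫
      = ∑ t, ⟪(res (bx k) (c t) : E), (res (bx l) (c t) : E)⟫ := by
    have step1 : ∀ i : ι, ∑ j, ⟪br (bx k) (bn i : E), (bn j : E)⟫ * ⟪br (bx l) (bn i : E), (bn j : E)⟫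
        = ⟪br (bx k) (bn i : E), br (bx l) (bn i : E)⟫ := by
      intro i
      exact parseval _ _ (hV2N (hbrNN _ (hnuN hKnu) _ (bn i).2)) (hV2N (hbrNN _ (hnuN hLnu) _ (bn i).2))
    calc ∑ i, ∑ j, ⟪br (bx k) (bn i : E), (bn j : E)⟫ * ⟪br (bx l) (bn i : E), (bn j : E)⟫
        = ∑ i, ⟪br (bx k) (bn i : E), br (bx l) (bn i : E)⟫ := by
          exact Finset.sum_congr rfl fun i _ => step1 i
      _ = ∑ i, ∑ t, ∑ u, (⟪c t, V₁.orthogonalProjectionOnto (bn i : E)⟫ * ⟪c u, V₁.orthogonalProjectionOnto (bn i : E)⟫)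
            * ⟪(res (bx k) (c t) : E), (res (bx l) (c u) : E)⟫ := by
          refine Finset.sum_congr rfl fun i _ => ?_
          rw [hS1 _ hKnu i, hS1 _ hLnu i]
          generalize (V₁.orthogonalProjectionOnto (bn i : E)) = v
          conv_lhs => rw [← c.sum_repr' v]
          simp only [map_sum, map_smul, Submodule.coe_sum, Submodule.coe_smul,
            inner_sum, sum_inner, real_inner_smul_left, real_inner_smul_right]
          rw [Finset.sum_comm]
          refine Finset.sum_congr rfl fun t _ => Finset.sum_congr rfl fun u _ => by ring
      _ = ∑ t, ∑ u, (∑ i, ⟪c t, V₁.orthogonalProjectionOnto (bn i : E)⟫ * ⟪c u, V₁.orthogonalProjectionOnto (bn i : E)⟫)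
            * ⟪(res (bx k) (c t) : E), (res (bx l) (c u) : E)⟫ := by
          rw [Finset.sum_comm]
          refine Finset.sum_congr rfl fun t _ => ?_
          rw [Finset.sum_comm]
          refine Finset.sum_congr rfl fun u _ => ?_
          rw [← Finset.sum_mul]
      _ = ∑ t, ⟪(res (bx k) (c t) : E), (res (bx l) (c t) : E)⟫ := by
          have horthc : ∀ t u, (∑ i, ⟪c t, V₁.orthogonalProjectionOnto (bn i : E)⟫ * ⟪c u, V₁.orthogonalProjectionOnto (bn i : E)⟫ : ℝ)
              = if t = u then 1 else 0 := by
            intro t u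
            have h1 : ∀ (w : V₁) (i : ι), (⟪w, V₁.orthogonalProjectionOnto (bn i : E)⟫ : ℝ)
                = ⟪(w : E), (bn i : E)⟫ := fun w i => by
              rw [Submodule.inner_orthogonalProjectionOnto_eq_of_mem_left]
            simp_rw [h1]
            rw [parseval _ _ (hV1N (c t).2) (hV1N (c u).2)]
            have := c.orthonormal
            rw [orthonormal_iff_ite] at this
            rw [← Submodule.coe_inner, this t u]
          refine Finset.sum_congr rfl fun t _ => ?_
          rw [Finset.sum_eq_single t]
          · rw [horthc t t]; simp
          · intro u _ hu
            rw [horthc t u, if_neg (Ne.symm hu)]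
            ring
          · intro h; exact absurd (Finset.mem_univ t) h
  -- the trace
  have htr : LinearMap.trace ℝ V₁ (LinearMap.adjoint (res (bx l)) ∘ₗ res (bx k))
      = ∑ t, ⟪(res (bx k) (c t) : E), (res (bx l) (c t) : E)⟫ := by
    rw [LinearMap.trace_eq_matrix_trace ℝ c.toBasis, Matrix.trace]
    refine Finset.sum_congr rfl fun t _ => ?_
    rw [Matrix.diag]
    rw [LinearMap.toMatrix_apply]
    rw [OrthonormalBasis.coe_toBasis, OrthonormalBasis.coe_toBasis_repr_apply,
      OrthonormalBasis.repr_apply_apply]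
    rw [LinearMap.comp_apply, LinearMap.adjoint_inner_right]
    rw [real_inner_comm, Submodule.coe_inner]
  rw [hmain, htr, hterm3]
  have : ∑ i, ∑ j, ⟪br (bn i : E) (bn j : E), bx k⟫ * ⟪br (bn i : E) (bn j : E), bx l⟫ = (0 : ℝ) := by
    refine Finset.sum_eq_zero fun i _ => Finset.sum_eq_zero fun j _ => ?_
    rw [hterm2 i j]; ring
  rw [this]
  ring
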